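/- Let A be a commutative ring and f, g ∈ A. Assume that A is classically f-adically complete (the canonical map A → lim_n A/f^n A is bijective), that g is a nonzerodivisorptr on A, and that f is a nonzerodivisor on the quotient A/gA (i.e. A/gA is f-torsion-free). Then A/gA is classically f-adically complete: the canonical map A/gA → lim_n (A/gA)/f^n (A/gA) is bijective. -/

import Mathlib

section Aux

variable {A : Type*} [CommRing A] (f g : A)

theorem mk_mem_smul_top_iff (n : ℕ) (x : A) :
    (Ideal.Quotient.mk (Ideal.span {g}) x) ∈
      ((Ideal.span {f}) ^ n • ⊤ : Submodule A (A ⧸ Ideal.span {g})) ↔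
      ∃ b c : A, x = f ^ n * b + g * c := by
  have h1 : ((Ideal.span {f}) ^ n • ⊤ : Submodule A (A ⧸ Ideal.span {g})) =
      Submodule.map (Ideal.span {g}).mkQ ((Ideal.span {f}) ^ n) := by
    rw [← (Submodule.map_top (Ideal.span {g}).mkQ).trans (Submodule.range_mkQ _),
      ← Submodule.map_smul'', smul_eq_mul, Ideal.mul_top]
  rw [h1, Submodule.mem_map]
  constructor
  · rintro ⟨y, hy, hxy⟩
    rw [Ideal.span_singleton_pow, Ideal.mem_span_singleton] at hy
    obtain ⟨b, rfl⟩ := hy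
    rw [Submodule.mkQ_apply] at hxy
    have : x - f ^ n * b ∈ Ideal.span {g} := by
      rw [← Submodule.Quotient.eq]
      exact hxy.symm
    rw [Ideal.mem_span_singleton] at this
    obtain ⟨c, hc⟩ := this
    exact ⟨b, c, by linear_combination hc⟩
  · rintro ⟨b, c, rfl⟩
    refine ⟨f ^ n * b, ?_, ?_⟩
    · rw [Ideal.span_singleton_pow, Ideal.mem_span_singleton]
      exact ⟨b, rfl⟩
    · rw [Submodule.mkQ_apply]
      show Submodule.Quotient.mk _ = Submodule.Quotient.mk _
      rw [Submodule.Quotient.eq]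
      rw [show f ^ n * b - (f ^ n * b + g * c) = -(g * c) by ring]
      exact Submodule.neg_mem _ (Ideal.mem_span_singleton.2 ⟨c, rfl⟩)

theorem pow_regular (hf : ∀ x : A, f * x ∈ Ideal.span {g} → x ∈ Ideal.span {g})
    (n : ℕ) : ∀ x : A, f ^ n * x ∈ Ideal.span {g} → x ∈ Ideal.span {g} := by
  induction n with
  | zero => intro x hx; simpa using hx
  | succ n ih =>
    intro x hx
    exact hf x (ih _ (by rw [show f ^ n * (f * x) = f ^ (n+1) * x by ring]; exact hx))

theorem smod_A_iff (x y : A) (n : ℕ) :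
    x ≡ y [SMOD ((Ideal.span {f}) ^ n • ⊤ : Submodule A A)] ↔ ∃ c, x - y = f ^ n * c := by
  rw [SModEq.sub_mem, smul_eq_mul, Ideal.mul_top, Ideal.span_singleton_pow,
    Ideal.mem_span_singleton]
  exact ⟨fun ⟨c, hc⟩ => ⟨c, hc⟩, fun ⟨c, hc⟩ => ⟨c, hc⟩⟩

end Aux

theorem quotient_isAdicComplete_of_isAdicComplete
    {A : Type*} [CommRing A] (f g : A)
    (hcomp : IsAdicComplete (Ideal.span {f}) A)
    (hg : g ∈ nonZeroDivisors A)
    (hf : ∀ x : A, f * x ∈ Ideal.span {g} → x ∈ Ideal.span {g}) :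
    IsAdicComplete (Ideal.span {f}) (A ⧸ Ideal.span {g}) := by
  set I := Ideal.span {f} with hI
  set J := Ideal.span {g} with hJ
  refine { toIsHausdorff := ?_, toIsPrecomplete := ?_ }
  · -- Hausdorff
    constructor
    intro x hx
    obtain ⟨a, rfl⟩ := Ideal.Quotient.mk_surjective x
    have key : ∀ n : ℕ, ∃ b c : A, a = f ^ n * b + g * c := by
      intro n
      have := hx n
      rw [SModEq.zero] at this
      exact (mk_mem_smul_top_iff f g n a).1 this
    choose b c hbc using key
    -- c (n+1) - c n ∈ (f^n)
    have hc : ∀ n : ℕ, ∃ d, c (n + 1) - c n = f ^ n * d := by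
      intro n
      have h1 : g * (c (n + 1) - c n) = f ^ n * (b n - f * b (n + 1)) := by
        have e1 := hbc n
        have e2 := hbc (n + 1)
        ring_nf
        ring_nf at e2
        linear_combination e1 - e2
      have h2 : b n - f * b (n + 1) ∈ J := by
        apply pow_regular f g hf n
        rw [← h1]
        exact Ideal.mem_span_singleton.2 ⟨c (n+1) - c n, rfl⟩
      obtain ⟨d, hd⟩ := Ideal.mem_span_singleton.1 h2
      refine ⟨d, ?_⟩
      have h3 := hg.2 _ (show (c (n + 1) - c n - f ^ n * d) * g = 0 by
        linear_combination h1 + f ^ n * hd)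
      linear_combination h3
    choose d hd using hc
    -- c is Cauchy
    have hcauchy : ∀ {m n : ℕ}, m ≤ n →
        c m ≡ c n [SMOD (I ^ m • ⊤ : Submodule A A)] := by
      intro m n hmn
      rw [smod_A_iff]
      clear hbc
      induction n with
      | zero => rw [Nat.le_zero] at hmn; subst hmn; exact ⟨0, by simp⟩
      | succ n ih =>
        rcases Nat.lt_or_ge m (n + 1) with h | h
        · have hmn' : m ≤ n := by omega
          obtain ⟨e, he⟩ := ih hmn'
          obtain ⟨k, hk⟩ : ∃ k, f ^ n = f ^ m * k := ⟨f ^ (n - m), by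
            rw [← pow_add]; congr 1; omega⟩
          refine ⟨e - k * d n, ?_⟩
          have := hd n
          rw [hk] at this
          linear_combination he - this
        · have : m = n + 1 := by omega
          subst this
          exact ⟨0, by ring⟩
    obtain ⟨L, hL⟩ := hcomp.toIsPrecomplete.prec hcauchy
    -- a - g * L ∈ ∩ (f^n)
    have hzero : a - g * L = 0 := by
      apply hcomp.toIsHausdorff.haus
      intro n
      rw [SModEq.zero, smul_eq_mul, Ideal.mul_top, Ideal.span_singleton_pow,
        Ideal.mem_span_singleton]
      obtain ⟨e, he⟩ := (smod_A_iff f _ _ n).1 (hL n)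
      refine ⟨b n + g * e, ?_⟩
      linear_combination hbc n + g * he
    rw [Ideal.Quotient.eq_zero_iff_mem]
    rw [sub_eq_zero] at hzero
    rw [hzero]
    exact Ideal.mem_span_singleton.2 ⟨L, rfl⟩
  · -- Precomplete
    constructor
    intro x hx
    -- choose lifts coherently
    have step : ∀ n : ℕ, ∀ y : A, Ideal.Quotient.mk J y = x n →
        ∃ z : A, Ideal.Quotient.mk J z = x (n + 1) ∧ ∃ u : A, z - y = f ^ n * u := by
      intro n y hy
      obtain ⟨a, ha⟩ := Ideal.Quotient.mk_surjective (x (n + 1))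
      have hdiff : Ideal.Quotient.mk J (a - y) ∈
          ((Ideal.span {f}) ^ n • ⊤ : Submodule A (A ⧸ J)) := by
        have h := hx (Nat.le_succ n)
        rw [SModEq.sub_mem] at h
        rw [map_sub, ha, hy]
        simpa using Submodule.neg_mem _ h
      obtain ⟨u, v, huv⟩ := (mk_mem_smul_top_iff f g n (a - y)).1 hdiff
      refine ⟨y + f ^ n * u, ?_, u, by ring⟩
      rw [← ha]
      rw [show y + f ^ n * u = a - g * v by linear_combination -huv]
      rw [map_sub, sub_eq_self]
      rw [Ideal.Quotient.eq_zero_iff_mem]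
      exact Ideal.mem_span_singleton.2 ⟨v, rfl⟩
    obtain ⟨a0, ha0⟩ := Ideal.Quotient.mk_surjective (x 0)
    -- build the sequence by recursion
    let B : ∀ n : ℕ, {y : A // Ideal.Quotient.mk J y = x n} := fun n =>
      Nat.rec ⟨a0, ha0⟩ (fun n p => ⟨Classical.choose (step n p.1 p.2),
        (Classical.choose_spec (step n p.1 p.2)).1⟩) n
    have hBstep : ∀ n : ℕ, ∃ u, (B (n + 1)).1 - (B n).1 = f ^ n * u := by
      intro n
      exact (Classical.choose_spec (step n (B n).1 (B n).2)).2
    -- B is Cauchy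
    have hcauchy : ∀ {m n : ℕ}, m ≤ n →
        (B m).1 ≡ (B n).1 [SMOD (I ^ m • ⊤ : Submodule A A)] := by
      intro m n hmn
      rw [smod_A_iff]
      induction n with
      | zero => rw [Nat.le_zero] at hmn; subst hmn; exact ⟨0, by simp⟩
      | succ n ih =>
        rcases Nat.lt_or_ge m (n + 1) with h | h
        · obtain ⟨e, he⟩ := ih (by omega)
          obtain ⟨u, hu⟩ := hBstep n
          obtain ⟨k, hk⟩ : ∃ k, f ^ n = f ^ m * k := ⟨f ^ (n - m), by
            rw [← pow_add]; congr 1; omega⟩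
          exact ⟨e - k * u, by rw [hk] at hu; linear_combination he - hu⟩
        · have : m = n + 1 := by omega
          subst this
          exact ⟨0, by ring⟩
    obtain ⟨L, hL⟩ := hcomp.toIsPrecomplete.prec hcauchy
    refine ⟨Ideal.Quotient.mk J L, fun n => ?_⟩
    rw [SModEq.sub_mem]
    rw [← (B n).2, ← map_sub]
    obtain ⟨e, he⟩ := (smod_A_iff f _ _ n).1 (hL n)
    exact (mk_mem_smul_top_iff f g n _).2 ⟨e, 0, by linear_combination he⟩
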